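/- Both P_{k+1}(K̂) and Q_k(K̂) are contained in div ABF_k(K̂). -/

import Mathlib

open MvPolynomial

noncomputable section

/-- Polynomials over the reference square with degree ≤ p in x and ≤ q in y. -/
def Qset (p q : ℕ) : Set (MvPolynomial (Fin 2) ℝ) :=
  {f | f.degreeOf 0 ≤ p ∧ f.degreeOf 1 ≤ q}

/-- Polynomials of total degree ≤ k. -/
def Pset (k : ℕ) : Set (MvPolynomial (Fin 2) ℝ) :=
  {f | f.totalDegree ≤ k}

/-- Divergence of a polynomial vector field. -/
def pdiv (v : MvPolynomial (Fin 2) ℝ × MvPolynomial (Fin 2) ℝ) : MvPolynomial (Fin 2) ℝ :=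
  pderiv 0 v.1 + pderiv 1 v.2

/-- Curl of a scalar polynomial. -/
def pcurl (f : MvPolynomial (Fin 2) ℝ) :
    MvPolynomial (Fin 2) ℝ × MvPolynomial (Fin 2) ℝ :=
  (pderiv 1 f, -(pderiv 0 f))

/-- The Raviart–Thomas space RT_k = Q_{k+1,k} × Q_{k,k+1}. -/
def RTset (k : ℕ) : Set (MvPolynomial (Fin 2) ℝ × MvPolynomial (Fin 2) ℝ) :=
  (Qset (k + 1) k) ×ˢ (Qset k (k + 1))

/-- The Arnold–Boffi–Falk space ABF_k = Q_{k+2,k} × Q_{k,k+2}. -/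
def ABFset (k : ℕ) : Set (MvPolynomial (Fin 2) ℝ × MvPolynomial (Fin 2) ℝ) :=
  (Qset (k + 2) k) ×ˢ (Qset k (k + 2))

/-- Antiderivative in the `i`-th variable. -/
def antider (i : Fin 2) (f : MvPolynomial (Fin 2) ℝ) : MvPolynomial (Fin 2) ℝ :=
  (AddMonoidAlgebra.coeff f).sum fun d c => monomial (d + Finsupp.single i 1) (c / (d i + 1))

lemma pderiv_antider (i : Fin 2) (f : MvPolynomial (Fin 2) ℝ) :
    pderiv i (antider i f) = f := by
  rw [antider, Finsupp.sum, map_sum]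
  conv_rhs => rw [f.as_sum]
  refine Finset.sum_congr rfl fun d hd => ?_
  rw [pderiv_monomial, add_tsub_cancel_right]
  have h2 : ((d + Finsupp.single i 1 : Fin 2 →₀ ℕ) i : ℕ) = d i + 1 := by simp
  rw [h2]
  congr 1
  have : ((d i : ℝ) + 1) ≠ 0 := by positivity
  push_cast
  field_simp
  rfl

lemma degreeOf_antider_le (i j : Fin 2) (f : MvPolynomial (Fin 2) ℝ) (n : ℕ)
    (h : ∀ d ∈ f.support, d j + (Finsupp.single i 1) j ≤ n) :
    degreeOf j (antider i f) ≤ n := by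
  rw [degreeOf_le_iff]
  intro m hm
  rw [antider, Finsupp.sum] at hm
  obtain ⟨d, hd, hm2⟩ := Finset.mem_biUnion.mp (MvPolynomial.support_sum hm)
  have hmd : m = d + Finsupp.single i 1 :=
    Finset.mem_singleton.mp (support_monomial_subset hm2)
  rw [hmd]
  simpa using h d hd

lemma fsum_eq (d : Fin 2 →₀ ℕ) : (d.sum fun _ e => e) = d 0 + d 1 := by
  rw [Finsupp.sum_fintype] <;> simp [Fin.sum_univ_two]

/-- P_{k+1}(K̂) ⊆ div ABF_k(K̂) and Q_k(K̂) ⊆ div ABF_k(K̂). -/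
theorem P_and_Q_subset_div_ABF (k : ℕ) :
    Pset (k + 1) ⊆ pdiv '' ABFset k ∧ Qset k k ⊆ pdiv '' ABFset k := by
  classical
  constructor
  · intro f hf
    have htot : f.totalDegree ≤ k + 1 := hf
    set p : (Fin 2 →₀ ℕ) → Prop := fun d => d 1 ≤ k with hp
    set f₁ : MvPolynomial (Fin 2) ℝ := AddMonoidAlgebra.ofCoeff (Finsupp.filter p (AddMonoidAlgebra.coeff f)) with hf₁
    set f₂ : MvPolynomial (Fin 2) ℝ := AddMonoidAlgebra.ofCoeff (Finsupp.filter (fun d => ¬ p d) (AddMonoidAlgebra.coeff f)) with hf₂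
    have hsplit : f₁ + f₂ = f := by
      rw [← AddMonoidAlgebra.ofCoeff_add, Finsupp.filter_pos_add_filter_neg]
    have hsupp₁ : ∀ d ∈ f₁.support, d ∈ f.support ∧ p d := by
      intro d hd
      rw [MvPolynomial.mem_support_iff, hf₁] at hd
      rw [show coeff d (AddMonoidAlgebra.ofCoeff (Finsupp.filter p (AddMonoidAlgebra.coeff f))) = (Finsupp.filter p (AddMonoidAlgebra.coeff f)) d from rfl,
        Finsupp.filter_apply] at hd
      by_cases hpd : p d
      · exact ⟨MvPolynomial.mem_support_iff.mpr (by simp [hpd] at hd; exact hd), hpd⟩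
      · simp [hpd] at hd
    have hsupp₂ : ∀ d ∈ f₂.support, d ∈ f.support ∧ ¬ p d := by
      intro d hd
      rw [MvPolynomial.mem_support_iff, hf₂] at hd
      rw [show coeff d (AddMonoidAlgebra.ofCoeff (Finsupp.filter (fun d => ¬ p d) (AddMonoidAlgebra.coeff f))) = (Finsupp.filter (fun d => ¬ p d) (AddMonoidAlgebra.coeff f)) d from rfl,
        Finsupp.filter_apply] at hd
      by_cases hpd : p d
      · simp [hpd] at hd
      · exact ⟨MvPolynomial.mem_support_iff.mpr (by simp [hpd] at hd; exact hd), hpd⟩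
    have hdtot : ∀ d ∈ f.support, d 0 + d 1 ≤ k + 1 := by
      intro d hd
      calc d 0 + d 1 = d.sum fun _ e => e := (fsum_eq d).symm
        _ ≤ f.totalDegree := le_totalDegree hd
        _ ≤ k + 1 := htot
    refine ⟨(antider 0 f₁, antider 1 f₂), ⟨⟨?_, ?_⟩, ?_, ?_⟩, ?_⟩
    · -- degreeOf 0 (antider 0 f₁) ≤ k + 2
      refine degreeOf_antider_le 0 0 f₁ (k + 2) fun d hd => ?_
      obtain ⟨hdf, _⟩ := hsupp₁ d hd
      have := hdtot d hdf
      simp only [Finsupp.single_eq_same]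
      omega
    · -- degreeOf 1 (antider 0 f₁) ≤ k
      refine degreeOf_antider_le 0 1 f₁ k fun d hd => ?_
      obtain ⟨_, hdp⟩ := hsupp₁ d hd
      simp only [hp] at hdp
      rw [Finsupp.single_apply]
      simpa using hdp
    · -- degreeOf 0 (antider 1 f₂) ≤ k
      refine degreeOf_antider_le 1 0 f₂ k fun d hd => ?_
      obtain ⟨hdf, hdp⟩ := hsupp₂ d hd
      have := hdtot d hdf
      simp only [hp, not_le] at hdp
      rw [Finsupp.single_apply]
      simp only [if_neg (by decide : ¬ (1 : Fin 2) = 0)]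
      omega
    · -- degreeOf 1 (antider 1 f₂) ≤ k + 2
      refine degreeOf_antider_le 1 1 f₂ (k + 2) fun d hd => ?_
      obtain ⟨hdf, _⟩ := hsupp₂ d hd
      have := hdtot d hdf
      simp only [Finsupp.single_eq_same]
      omega
    · rw [pdiv]
      simp only
      rw [pderiv_antider, pderiv_antider, hsplit]
  · intro f hf
    obtain ⟨h0, h1⟩ := hf
    refine ⟨(antider 0 f, 0), ⟨⟨?_, ?_⟩, ?_, ?_⟩, ?_⟩
    · refine degreeOf_antider_le 0 0 f (k + 2) fun d hd => ?_
      have := (degreeOf_le_iff.mp h0) d hd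
      simp only [Finsupp.single_eq_same]
      omega
    · refine degreeOf_antider_le 0 1 f k fun d hd => ?_
      have := (degreeOf_le_iff.mp h1) d hd
      rw [Finsupp.single_apply]
      simp only [if_neg (by decide : ¬ (0 : Fin 2) = 1)]
      omega
    · simp [degreeOf_zero]
    · simp [degreeOf_zero]
    · rw [pdiv]
      simp only [map_zero, add_zero]
      exact pderiv_antider 0 f
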